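/- Let a, b, c > 0, ε ∈ {1,-1}, and real constants c1, c2. The function u(t,x) = c1·e^{ct} + ((a + 2εc)/(2b))·x·(c2 + ((a + 2(1-ε)c)/2)·t - log x) satisfies u_t + a·x²·u_xx + b·x³·(u_xx)² + c·x·u_x - c·u = 0 for x > 0. -/

import Mathlib

theorem stmt17 (a b c ε c1 c2 : ℝ)
    (ha : 0 < a)
    (hb : 0 < b)
    (hc : 0 < c)
    (hε : ε = 1 ∨ ε = -1)
    (u : ℝ → ℝ → ℝ)
    (hu : ∀ t x : ℝ, u t x = c1 * Real.exp (c * t) + ((a + 2 * ε * c) / (2 * b)) * x *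
      (c2 + ((a + 2 * (1 - ε) * c) / 2) * t - Real.log x)) :
    ∀ t x : ℝ, 0 < x →
      deriv (fun s => u s x) t
      + a * x ^ 2 * deriv (fun y => deriv (fun z => u t z) y) x
      + b * x ^ 3 * (deriv (fun y => deriv (fun z => u t z) y) x) ^ 2 + c * x * deriv (fun y => u t y) x - c * u t x = 0 := by
  intro t x hx
  set K := (a + 2 * ε * c) / (2 * b) with hK
  set B := (a + 2 * (1 - ε) * c) / 2 with hB
  -- time derivative
  have ht : deriv (fun s => u s x) t = c1 * (c * Real.exp (c * t)) + K * x * B := by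
    have heq : (fun s => u s x)
        = fun s => c1 * Real.exp (c * s) + K * x * (c2 + B * s - Real.log x) := by
      funext s; rw [hu]
    rw [heq]
    have e1 : HasDerivAt (fun s : ℝ => Real.exp (c * s)) (c * Real.exp (c * t)) t := by
      have := (Real.hasDerivAt_exp (c * t)).comp t ((hasDerivAt_id t).const_mul c)
      simpa [mul_comm, Function.comp_def] using this
    have e2 : HasDerivAt (fun s : ℝ => c2 + B * s - Real.log x) B t := by
      simpa using (((hasDerivAt_id t).const_mul B).const_add c2).sub_const (Real.log x)
    exact ((e1.const_mul c1).add (e2.const_mul (K * x))).deriv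
  -- spatial first derivative at any positive point
  have hsp : ∀ y : ℝ, 0 < y → HasDerivAt (fun z => u t z)
      (K * (c2 + B * t - Real.log y) - K) y := by
    intro y hy
    have heq : (fun z => u t z)
        = fun z => c1 * Real.exp (c * t) + (K * z) * (c2 + B * t - Real.log z) := by
      funext z; rw [hu]
    rw [heq]
    have h1 : HasDerivAt (fun z : ℝ => K * z) K y := by
      simpa using (hasDerivAt_id y).const_mul K
    have h2 : HasDerivAt (fun z : ℝ => c2 + B * t - Real.log z) (-(1 / y)) y := by
      simpa [one_div] using (Real.hasDerivAt_log hy.ne').const_sub (c2 + B * t)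
    have h3 := (h1.mul h2).const_add (c1 * Real.exp (c * t))
    refine h3.congr_deriv ?_
    have hyy : K * y * -(1 / y) = -K := by
      rw [mul_neg, mul_assoc, mul_one_div_cancel hy.ne', mul_one]
    rw [hyy]
    ring
  have hdx : deriv (fun y => u t y) x = K * (c2 + B * t - Real.log x) - K := (hsp x hx).deriv
  -- second spatial derivative
  have hev : deriv (fun z => u t z) =ᶠ[nhds x]
      fun y => K * (c2 + B * t - Real.log y) - K := by
    filter_upwards [Ioi_mem_nhds hx] with y hy
    exact (hsp y hy).deriv
  have hd2 : deriv (fun y => deriv (fun z => u t z) y) x = K * (-(1 / x)) := by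
    rw [hev.deriv_eq]
    have h2 : HasDerivAt (fun z : ℝ => c2 + B * t - Real.log z) (-(1 / x)) x := by
      simpa [one_div] using (Real.hasDerivAt_log hx.ne').const_sub (c2 + B * t)
    exact ((h2.const_mul K).sub_const K).deriv
  rw [ht, hdx, hd2, hu t x, hK, hB]
  field_simp
  ring
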